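/- Let (Y, ν) be a standard non-atomic probability space and let S be an automorphism of (Y, ν) that is partially rigid with coefficient a > 0. Let (X, μ) be a standard non-atomic probability space and T a mixing automorphism of (X, μ). Then there exist a measurable set A ⊆ X and ε > 0 such that for every invertible measure-preserving map Q : X → Y (with Q_*μ = ν), the conjugate V = Q⁻¹ ∘ S ∘ Q satisfies |μ(Vⁿ A ∩ A) − μ(Tⁿ A ∩ A)| ≥ ε for some n ∈ ℤ. (In other words, the conjugacy class of a partially rigid transformation cannot approximate mixing transformations in the leash topology.) -/

import Mathlib

open MeasureTheory Filter Set
open scoped symmDiff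

variable {X : Type*} [MeasurableSpace X]

/-- `n`-th iterate of a measurable equivalence, `n : ℕ`. -/
def mnpow (T : X ≃ᵐ X) : ℕ → X ≃ᵐ X
  | 0 => MeasurableEquiv.refl X
  | n + 1 => (mnpow T n).trans T

/-- `n`-th iterate of a measurable equivalence, `n : ℤ`; negative powers are
iterates of the inverse. -/
def mzpow (T : X ≃ᵐ X) : ℤ → X ≃ᵐ X
  | Int.ofNat n => mnpow T n
  | Int.negSucc n => mnpow T.symm (n + 1)

/-- An automorphism `T` of `(X, μ)` is mixing if `μ (Tⁿ A ∩ B) → μ A * μ B` as `n → ∞`. -/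
def Mixing (μ : Measure X) (T : X ≃ᵐ X) : Prop :=
  ∀ A B : Set X, MeasurableSet A → MeasurableSet B →
    Tendsto (fun n : ℕ => μ (mnpow T n '' A ∩ B)) atTop (nhds (μ A * μ B))

/-- An automorphism `S` of `(Y, ν)` is partially rigid with coefficient `a > 0` if
`limsup_{i → ∞} ν (A ∩ Sⁱ A) ≥ a · ν A` for every measurable set `A`. -/
def PartiallyRigid {Y : Type*} [MeasurableSpace Y] (ν : Measure Y) (S : Y ≃ᵐ Y)
    (a : ℝ) : Prop :=
  ∀ A : Set Y, MeasurableSet A →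
    a * (ν A).toReal ≤ limsup (fun i : ℕ => (ν (A ∩ mnpow S i '' A)).toReal) atTop

/- ### Auxiliary lemmas -/

lemma exists_Iic_measure_mem (ρ : Measure ℝ) [IsProbabilityMeasure ρ] [NullSingletonClass ρ]
    {c : ℝ} (hc0 : 0 < c) (hc1 : c ≤ 1) :
    ∃ t : ℝ, ENNReal.ofReal (c / 2) ≤ ρ (Iic t) ∧ ρ (Iic t) < ENNReal.ofReal c := by
  set F : ℝ → ℝ := fun t => (ρ (Iic t)).toReal with hF
  have hFmono : Monotone F := fun s t hst =>
    ENNReal.toReal_mono (measure_ne_top ρ _) (measure_mono (Iic_subset_Iic.2 hst))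
  have hFofReal : ∀ t, ρ (Iic t) = ENNReal.ofReal (F t) := fun t =>
    (ENNReal.ofReal_toReal (measure_ne_top ρ _)).symm
  have htop : Tendsto (fun t : ℝ => ρ (Iic t)) atTop (nhds 1) := by
    simpa using tendsto_measure_Iic_atTop ρ
  have hbot : Tendsto (fun t : ℝ => ρ (Iic t)) atBot (nhds 0) := by
    have h1 : (⋂ t : ℝ, Iic t) = (∅ : Set ℝ) := by
      ext x; simp only [mem_iInter, mem_Iic, mem_empty_iff_false, iff_false, not_forall, not_le]
      exact ⟨x - 1, by linarith⟩
    have := tendsto_measure_iInter_atBot (μ := ρ) (s := fun t : ℝ => Iic t)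
      (fun t => (measurableSet_Iic).nullMeasurableSet) (fun s t hst => Iic_subset_Iic.2 hst)
      ⟨0, measure_ne_top ρ _⟩
    rw [h1] at this
    simpa [Function.comp_def] using this
  set Sset : Set ℝ := {t | c / 2 ≤ F t} with hSset
  have hSne : Sset.Nonempty := by
    have : ∀ᶠ t in atTop, ENNReal.ofReal (c/2) < ρ (Iic t) := by
      refine htop.eventually_const_lt ?_
      rw [← ENNReal.ofReal_one]
      exact ENNReal.ofReal_lt_ofReal_iff_of_nonneg (by linarith) |>.2 (by linarith)
    obtain ⟨t, ht⟩ := this.exists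
    exact ⟨t, by
      have : ENNReal.ofReal (c/2) ≤ ENNReal.ofReal (F t) := by rw [← hFofReal]; exact ht.le
      exact (ENNReal.ofReal_le_ofReal_iff ENNReal.toReal_nonneg).1 this⟩
  have hSbdd : BddBelow Sset := by
    have : ∀ᶠ t in atBot, ρ (Iic t) < ENNReal.ofReal (c/2) := by
      refine hbot.eventually_lt_const ?_
      simpa using (by linarith : (0:ℝ) < c/2)
    obtain ⟨t', ht'⟩ := this.exists
    refine ⟨t', fun s hs => ?_⟩
    by_contra hlt
    push_neg at hlt
    have hle : F s ≤ F t' := hFmono hlt.le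
    have h2 : F t' < c / 2 := by
      have := ht'
      rw [hFofReal] at this
      exact (ENNReal.ofReal_lt_ofReal_iff (by linarith)).1 this
    have := hs
    simp only [hSset, mem_setOf_eq] at this
    linarith
  set t₀ := sInf Sset with ht₀
  have hIcc : Tendsto (fun δ => ρ (Icc (t₀ - δ) (t₀ + δ))) (nhds 0) (nhds 0) :=
    tendsto_measure_Icc ρ t₀
  have hδ : ∃ δ : ℝ, 0 < δ ∧ ρ (Icc (t₀ - δ) (t₀ + δ)) < ENNReal.ofReal (c/2) := by
    have h1 : ∀ᶠ δ in nhdsWithin (0:ℝ) (Ioi 0),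
        ρ (Icc (t₀ - δ) (t₀ + δ)) < ENNReal.ofReal (c/2) := by
      refine ((hIcc.mono_left nhdsWithin_le_nhds).eventually_lt_const ?_)
      simpa using (by linarith : (0:ℝ) < c/2)
    obtain ⟨δ, h2, h3⟩ := (h1.and self_mem_nhdsWithin).exists
    exact ⟨δ, h3, h2⟩
  obtain ⟨δ, hδpos, hδsmall⟩ := hδ
  refine ⟨t₀ + δ, ?_, ?_⟩
  · obtain ⟨s, hsS, hslt⟩ := exists_lt_of_csInf_lt hSne (by linarith : sInf Sset < t₀ + δ)
    have : c/2 ≤ F (t₀ + δ) := le_trans hsS (hFmono hslt.le)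
    rw [hFofReal]
    exact ENNReal.ofReal_le_ofReal this
  · have hnot : F (t₀ - δ) < c/2 := by
      by_contra hge
      push_neg at hge
      have : t₀ ≤ t₀ - δ := csInf_le hSbdd hge
      linarith
    have hsub : Iic (t₀ + δ) ⊆ Iic (t₀ - δ) ∪ Icc (t₀ - δ) (t₀ + δ) := by
      intro x hx
      rcases le_or_gt x (t₀ - δ) with h | h
      · exact Or.inl h
      · exact Or.inr ⟨h.le, hx⟩
    calc ρ (Iic (t₀ + δ)) ≤ ρ (Iic (t₀ - δ)) + ρ (Icc (t₀ - δ) (t₀ + δ)) :=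
          le_trans (measure_mono hsub) (measure_union_le _ _)
      _ < ENNReal.ofReal (c/2) + ENNReal.ofReal (c/2) := by
          refine ENNReal.add_lt_add ?_ hδsmall
          rw [hFofReal]
          exact (ENNReal.ofReal_lt_ofReal_iff (by linarith)).2 hnot
      _ = ENNReal.ofReal c := by rw [← ENNReal.ofReal_add (by linarith) (by linarith)]; ring_nf

lemma exists_set_measure_mem {X : Type*} [MeasurableSpace X] [StandardBorelSpace X]
    (μ : Measure X) [IsProbabilityMeasure μ] [NullSingletonClass μ]
    {c : ℝ} (hc0 : 0 < c) (hc1 : c ≤ 1) :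
    ∃ A : Set X, MeasurableSet A ∧ ENNReal.ofReal (c / 2) ≤ μ A ∧ μ A < ENNReal.ofReal c := by
  obtain ⟨f, hf⟩ := exists_measurableEmbedding_real X
  set ρ : Measure ℝ := μ.map f with hρ
  have hmap : ∀ s : Set ℝ, MeasurableSet s → ρ s = μ (f ⁻¹' s) := fun s hs =>
    Measure.map_apply hf.measurable hs
  have h1 : IsProbabilityMeasure ρ := Measure.isProbabilityMeasure_map hf.measurable.aemeasurable
  have h2 : NullSingletonClass ρ := by
    constructor
    intro x
    rw [hmap _ (measurableSet_singleton x)]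
    have hss : (f ⁻¹' {x}).Subsingleton := fun a ha b hb => hf.injective (ha.trans hb.symm)
    exact hss.measure_zero μ
  obtain ⟨t, ht1, ht2⟩ := exists_Iic_measure_mem ρ hc0 hc1
  refine ⟨f ⁻¹' Iic t, hf.measurable measurableSet_Iic, ?_, ?_⟩
  · rwa [← hmap _ measurableSet_Iic]
  · rwa [← hmap _ measurableSet_Iic]

lemma mzpow_natCast (T : X ≃ᵐ X) (n : ℕ) : mzpow T (n : ℤ) = mnpow T n := rfl

lemma mnpow_conj {Y : Type*} [MeasurableSpace Y] (Q : X ≃ᵐ Y) (S : Y ≃ᵐ Y) (i : ℕ) :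
    mnpow ((Q.trans S).trans Q.symm) i = (Q.trans (mnpow S i)).trans Q.symm := by
  induction i with
  | zero =>
    ext x
    simp [mnpow, MeasurableEquiv.trans_apply]
  | succ n ih =>
    ext x
    simp [mnpow, ih, MeasurableEquiv.trans_apply]

lemma conj_measure_eq {Y : Type*} [MeasurableSpace Y] (μ : Measure X) (ν : Measure Y)
    (Q : X ≃ᵐ Y) (hQ : MeasurePreserving Q μ ν) (S : Y ≃ᵐ Y)
    {A : Set X} (hA : MeasurableSet A) (i : ℕ) :
    μ (mnpow ((Q.trans S).trans Q.symm) i '' A ∩ A) = ν (Q '' A ∩ mnpow S i '' (Q '' A)) := by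
  have hB : MeasurableSet (Q '' A) := by
    rw [Q.image_eq_preimage_symm]
    exact Q.symm.measurable hA
  have hSi : MeasurableSet (mnpow S i '' (Q '' A)) := by
    rw [(mnpow S i).image_eq_preimage_symm]
    exact (mnpow S i).symm.measurable hB
  have himg : mnpow ((Q.trans S).trans Q.symm) i '' A
      = Q.symm '' (mnpow S i '' (Q '' A)) := by
    rw [mnpow_conj]
    rw [show ⇑((Q.trans (mnpow S i)).trans Q.symm) = ⇑Q.symm ∘ ⇑(mnpow S i) ∘ ⇑Q from rfl]
    rw [image_comp, image_comp]
  have hAeq : A = Q.symm '' (Q '' A) := by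
    rw [← image_comp, MeasurableEquiv.symm_comp_self, image_id]
  calc μ (mnpow ((Q.trans S).trans Q.symm) i '' A ∩ A)
      = μ (Q.symm '' (mnpow S i '' (Q '' A)) ∩ Q.symm '' (Q '' A)) := by
        rw [himg, ← hAeq]
    _ = μ (Q.symm '' (mnpow S i '' (Q '' A) ∩ Q '' A)) := by
        rw [Set.image_inter Q.symm.injective]
    _ = μ (Q ⁻¹' (mnpow S i '' (Q '' A) ∩ Q '' A)) := by
        rw [Q.symm.image_eq_preimage_symm, Q.symm_symm]
    _ = ν (mnpow S i '' (Q '' A) ∩ Q '' A) := hQ.measure_preimage (hSi.inter hB).nullMeasurableSet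
    _ = ν (Q '' A ∩ mnpow S i '' (Q '' A)) := by rw [inter_comm]

/-- The conjugacy class of a partially rigid transformation cannot
approximate a mixing transformation in the leash topology. -/
theorem partially_rigid_conjugates_not_dense
    {X Y : Type*} [MeasurableSpace X] [StandardBorelSpace X]
    [MeasurableSpace Y] [StandardBorelSpace Y]
    (μ : Measure X) (ν : Measure Y)
    [IsProbabilityMeasure μ] [IsProbabilityMeasure ν] [NullSingletonClass μ] [NullSingletonClass ν]
    (S : Y ≃ᵐ Y) (hS : MeasurePreserving S ν ν)
    (a : ℝ) (ha : 0 < a) (hSpr : PartiallyRigid ν S a)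
    (T : X ≃ᵐ X) (hT : MeasurePreserving T μ μ) (hTmix : Mixing μ T) :
    ∃ A : Set X, MeasurableSet A ∧ ∃ ε : ℝ, 0 < ε ∧
      ∀ Q : X ≃ᵐ Y, MeasurePreserving Q μ ν →
        ∃ n : ℤ,
          ε ≤ |(μ (mzpow ((Q.trans S).trans Q.symm) n '' A ∩ A)).toReal -
                (μ (mzpow T n '' A ∩ A)).toReal| := by
  set c := min a 1 with hc
  have hc0 : 0 < c := lt_min ha one_pos
  have hc1 : c ≤ 1 := min_le_right _ _
  obtain ⟨A, hA, hA1, hA2⟩ := exists_set_measure_mem μ hc0 hc1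
  have hμAne : μ A ≠ ⊤ := measure_ne_top μ A
  set m := (μ A).toReal with hm
  have hm1 : c / 2 ≤ m := by
    have := ENNReal.toReal_mono hμAne hA1
    rwa [ENNReal.toReal_ofReal (by linarith)] at this
  have hm2 : m < c := by
    have := (ENNReal.toReal_lt_toReal hμAne ENNReal.ofReal_ne_top).2 hA2
    rwa [ENNReal.toReal_ofReal (le_of_lt hc0)] at this
  have hma : m < a := lt_of_lt_of_le hm2 (min_le_left _ _)
  have hmpos : 0 < m := by linarith
  set ε := (a * m - m * m) / 3 with hε
  have hεpos : 0 < ε := by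
    have h1 : m * m < a * m := by nlinarith
    rw [hε]; linarith
  refine ⟨A, hA, ε, hεpos, ?_⟩
  intro Q hQ
  by_contra hcon
  push_neg at hcon
  set v : ℕ → ℝ := fun i => (μ (mnpow ((Q.trans S).trans Q.symm) i '' A ∩ A)).toReal with hv
  set t : ℕ → ℝ := fun i => (μ (mnpow T i '' A ∩ A)).toReal with htdef
  have hvt : ∀ i : ℕ, |v i - t i| < ε := by
    intro i
    have := hcon (i : ℤ)
    rw [mzpow_natCast, mzpow_natCast] at this
    exact this
  -- mixing: t i → m * m
  have htend : Tendsto t atTop (nhds (m * m)) := by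
    have h := hTmix A A hA hA
    have h2 := (ENNReal.tendsto_toReal (ENNReal.mul_ne_top hμAne hμAne)).comp h
    simpa [htdef, hm, ENNReal.toReal_mul, Function.comp_def] using h2
  -- rigidity: a * m ≤ limsup v
  have hB : MeasurableSet (Q '' A) := by
    rw [Q.image_eq_preimage_symm]
    exact Q.symm.measurable hA
  have hνB : ν (Q '' A) = μ A := by
    rw [Q.image_eq_preimage_symm]
    exact (hQ.symm Q).measure_preimage hA.nullMeasurableSet
  have hveq : (fun i : ℕ => (ν (Q '' A ∩ mnpow S i '' (Q '' A))).toReal) = v := by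
    funext i
    simp only [hv]
    rw [conj_measure_eq μ ν Q hQ S hA i]
  have hlim : a * m ≤ limsup v atTop := by
    have := hSpr (Q '' A) hB
    rwa [hνB, ← hm, hveq] at this
  -- upper bound on limsup v
  have hev : ∀ᶠ i in atTop, v i ≤ m * m + 2 * ε := by
    filter_upwards [htend.eventually_lt_const (show m * m < m * m + ε by linarith)] with i hi
    have h1 := hvt i
    rw [abs_lt] at h1
    linarith [h1.1, h1.2]
  have hcob : IsCoboundedUnder (· ≤ ·) atTop v :=
    isCoboundedUnder_le_of_le atTop (x := 0) fun i => ENNReal.toReal_nonneg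
  have hlimsup_le : limsup v atTop ≤ m * m + 2 * ε := limsup_le_of_le hcob hev
  have : a * m ≤ m * m + 2 * ε := le_trans hlim hlimsup_le
  rw [hε] at this
  linarith [hεpos]
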